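/- Let (c_1,…,c_{n'}) be a sequence of positive integers, bounded by M, such that all subsets A ⊆ {1,…,n'} with |A| ≤ λ'n' have pairwise distinct sums. For k ≥ 1, set n = k·n' and λ = λ'/k, and define the sequence (a_1,…,a_n) in ℤ^k by placing k copies of the original sequence on the k coordinate axes: for 1 ≤ j ≤ k and 1 ≤ i ≤ n', a_{(j−1)n' + i} is the vector whose j-th coordinate is c_i and whose other coordinates are 0. Then (a_1,…,a_n) is M-bounded and all subsets A ⊆ {1,…,n} with |A| ≤ λn have pairwise distinct (vector) sums. -/

import Mathlib

/-- Placing k copies of an M-bounded F_{λ',n'}-sum distinct integer sequence on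
the k coordinate axes yields an M-bounded F_{λ'/k, kn'}-sum distinct sequence
in ℤ^k. -/
theorem stmt_11 (n' k M : ℕ) (hk : 1 ≤ k) (lam' : ℝ) (c : ℕ → ℤ)
    (hc : ∀ i ∈ Finset.Icc 1 n', 0 < c i ∧ c i ≤ (M : ℤ))
    (hdist : ∀ A₁ A₂ : Finset ℕ, A₁ ⊆ Finset.Icc 1 n' → A₂ ⊆ Finset.Icc 1 n' →
      (A₁.card : ℝ) ≤ lam' * n' → (A₂.card : ℝ) ≤ lam' * n' →
      ∑ i ∈ A₁, c i = ∑ i ∈ A₂, c i → A₁ = A₂)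
    (a : ℕ → Fin k → ℤ)
    (hadef : ∀ j, 1 ≤ j → j ≤ k → ∀ i, 1 ≤ i → i ≤ n' → ∀ l : Fin k,
      a ((j - 1) * n' + i) l = if (l : ℕ) + 1 = j then c i else 0) :
    (∀ m ∈ Finset.Icc 1 (k * n'), ∀ l : Fin k, 0 ≤ a m l ∧ a m l ≤ (M : ℤ)) ∧
    (∀ A₁ A₂ : Finset ℕ, A₁ ⊆ Finset.Icc 1 (k * n') → A₂ ⊆ Finset.Icc 1 (k * n') →
      (A₁.card : ℝ) ≤ (lam' / k) * (k * n') →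
      (A₂.card : ℝ) ≤ (lam' / k) * (k * n') →
      (∑ i ∈ A₁, a i) = (∑ i ∈ A₂, a i) → A₁ = A₂) := by
  rcases Nat.eq_zero_or_pos n' with hn0 | hn'
  · subst hn0
    refine ⟨?_, ?_⟩
    · intro m hm
      simp at hm
    · intro A₁ A₂ h1 h2 _ _ _
      have e1 : A₁ = ∅ := by
        rw [← Finset.subset_empty]
        simpa using h1
      have e2 : A₂ = ∅ := by
        rw [← Finset.subset_empty]
        simpa using h2
      rw [e1, e2]
  -- main case n' > 0
  have key : ∀ m ∈ Finset.Icc 1 (k * n'), ∃ l : ℕ, ∃ i : ℕ, l < k ∧ 1 ≤ i ∧ i ≤ n' ∧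
      m = l * n' + i ∧ ∀ t : Fin k, a m t = if (t : ℕ) = l then c i else 0 := by
    intro m hm
    rw [Finset.mem_Icc] at hm
    obtain ⟨l, r, hr, hdm⟩ : ∃ l r, r < n' ∧ m - 1 = n' * l + r :=
      ⟨(m - 1) / n', (m - 1) % n', Nat.mod_lt _ hn', (Nat.div_add_mod (m - 1) n').symm⟩
    have hlk : l < k := by
      by_contra hkl
      push_neg at hkl
      have h1 : n' * k ≤ n' * l := Nat.mul_le_mul_left n' hkl
      have h2 : n' * k = k * n' := Nat.mul_comm _ _
      omega
    have hcomm : l * n' = n' * l := Nat.mul_comm _ _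
    have hm' : m = l * n' + (r + 1) := by omega
    refine ⟨l, r + 1, hlk, by omega, by omega, hm', ?_⟩
    intro t
    have h := hadef (l + 1) (by omega) (by omega) (r + 1) (by omega) (by omega) t
    simp only [Nat.add_sub_cancel] at h
    rw [hm', h]
    split_ifs with h1 h2 h3 <;> first | rfl | omega
  set B : Fin k → Finset ℕ → Finset ℕ :=
    fun t A => (Finset.Icc 1 n').filter (fun i => (t : ℕ) * n' + i ∈ A) with hB
  have hval : ∀ (t : Fin k) (i : ℕ), 1 ≤ i → i ≤ n' → a ((t : ℕ) * n' + i) t = c i := by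
    intro t i h1 h2
    have h := hadef ((t : ℕ) + 1) (by omega) (by omega) i h1 h2 t
    simp only [Nat.add_sub_cancel] at h
    simpa using h
  have hsum : ∀ A ⊆ Finset.Icc 1 (k * n'), ∀ t : Fin k,
      ∑ m ∈ A, a m t = ∑ i ∈ B t A, c i := by
    intro A hA t
    have himg : ((B t A).image (fun i => (t : ℕ) * n' + i)) ⊆ A := by
      intro m hm
      simp only [hB, Finset.mem_image, Finset.mem_filter] at hm
      obtain ⟨i, ⟨_, hiA⟩, rfl⟩ := hm
      exact hiA
    have hzero : ∀ m ∈ A, m ∉ ((B t A).image (fun i => (t : ℕ) * n' + i)) → a m t = 0 := by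
      intro m hm hnot
      obtain ⟨l, i, hlk, h1, h2, rfl, hv⟩ := key m (hA hm)
      rw [hv t]
      rcases eq_or_ne ((t : ℕ)) l with heq | hne
      · exfalso
        apply hnot
        simp only [hB, Finset.mem_image, Finset.mem_filter, Finset.mem_Icc]
        exact ⟨i, ⟨⟨h1, h2⟩, by rw [heq]; exact hm⟩, by rw [heq]⟩
      · rw [if_neg hne]
    rw [← Finset.sum_subset himg hzero]
    rw [Finset.sum_image (fun i₁ _ i₂ _ h => by omega)]
    apply Finset.sum_congr rfl
    intro i hi
    simp only [hB, Finset.mem_filter, Finset.mem_Icc] at hi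
    exact hval t i hi.1.1 hi.1.2
  have hcard : ∀ (t : Fin k) (A : Finset ℕ), (B t A).card ≤ A.card := by
    intro t A
    apply Finset.card_le_card_of_injOn (fun i => (t : ℕ) * n' + i)
    · intro i hi
      rw [Finset.mem_coe] at hi
      simp only [hB, Finset.mem_filter] at hi
      exact hi.2
    · intro i₁ _ i₂ _ h
      have h' : (t : ℕ) * n' + i₁ = (t : ℕ) * n' + i₂ := h
      omega
  have hlamk : (lam' / k) * ((k * n' : ℕ) : ℝ) = lam' * n' := by
    have hk0 : (k : ℝ) ≠ 0 := by positivity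
    push_cast
    field_simp
  refine ⟨?_, ?_⟩
  · intro m hm t
    obtain ⟨l, i, hlk, h1, h2, rfl, hv⟩ := key m hm
    rw [hv t]
    obtain ⟨hpos, hle⟩ := hc i (Finset.mem_Icc.mpr ⟨h1, h2⟩)
    split_ifs
    · exact ⟨le_of_lt hpos, hle⟩
    · exact ⟨le_refl 0, by positivity⟩
  · intro A₁ A₂ hA₁ hA₂ hc₁ hc₂ hseq
    have hBeq : ∀ t : Fin k, B t A₁ = B t A₂ := by
      intro t
      apply hdist
      · exact Finset.filter_subset _ _
      · exact Finset.filter_subset _ _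
      · calc ((B t A₁).card : ℝ) ≤ (A₁.card : ℝ) := by exact_mod_cast hcard t A₁
          _ ≤ (lam' / k) * ((k * n' : ℕ) : ℝ) := by exact_mod_cast hc₁
          _ = lam' * n' := hlamk
      · calc ((B t A₂).card : ℝ) ≤ (A₂.card : ℝ) := by exact_mod_cast hcard t A₂
          _ ≤ (lam' / k) * ((k * n' : ℕ) : ℝ) := by exact_mod_cast hc₂
          _ = lam' * n' := hlamk
      · have := congrFun hseq t
        rw [Finset.sum_apply, Finset.sum_apply] at this
        rw [← hsum A₁ hA₁ t, ← hsum A₂ hA₂ t]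
        exact this
    ext m
    constructor
    · intro hm
      obtain ⟨l, i, hlk, h1, h2, rfl, _⟩ := key m (hA₁ hm)
      have hi : i ∈ B ⟨l, hlk⟩ A₁ := by
        simp only [hB, Finset.mem_filter, Finset.mem_Icc]
        exact ⟨⟨h1, h2⟩, hm⟩
      rw [hBeq] at hi
      simp only [hB, Finset.mem_filter] at hi
      exact hi.2
    · intro hm
      obtain ⟨l, i, hlk, h1, h2, rfl, _⟩ := key m (hA₂ hm)
      have hi : i ∈ B ⟨l, hlk⟩ A₂ := by
        simp only [hB, Finset.mem_filter, Finset.mem_Icc]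
        exact ⟨⟨h1, h2⟩, hm⟩
      rw [← hBeq] at hi
      simp only [hB, Finset.mem_filter] at hi
      exact hi.2
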